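/- arXiv:1507.06756 — 5 statements merged into one kernel-verified Lean document; each statement's English description precedes it below -/
import Mathlib

section
/- Let n > a ≥ 1 be coprime integers, let n/a = [b_1, …, b_r] and n/(n−a) = [a_1, …, a_e] be the Hirzebruch–Jung continued fraction expansions with all entries ≥ 2. Then the concatenated Hirzebruch–Jung continued fraction [b_1, …, b_r, 1, a_e, …, a_1] is defined except for its full value, which equals 0 (i.e. all proper tails are nonzero and the total value is 0). -/
/-- Hirzebruch–Jung continued fraction: `hj [] = 0`, `hj (c :: cs) = c - (hj cs)⁻¹`.
(In particular `hj [c] = c` since `(0:ℚ)⁻¹ = 0`.) -/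
def hj : List ℚ → ℚ
  | [] => 0
  | c :: cs => c - (hj cs)⁻¹

/-- All proper nonempty tails (suffixes) of `l` have nonzero HJ value, i.e. the
continued fraction `hj l` is defined. -/
def hjTailsNonzero (l : List ℚ) : Prop :=
  ∀ l' : List ℚ, l' ≠ [] → l' ≠ l → l' <:+ l → hj l' ≠ 0

/-- The HJ continued fraction of `l` is defined and equals `0`. -/
def hjZero (l : List ℚ) : Prop :=
  hjTailsNonzero l ∧ hj l = 0

def castList (l : List ℤ) : List ℚ := l.map fun x => (x : ℚ)

def hjF : List ℤ → ℤ × ℤ → ℤ × ℤ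
  | [], s => s
  | c :: l, s => ((c * (hjF l s).1 - (hjF l s).2), (hjF l s).1)

lemma hjF_append (l m : List ℤ) (s : ℤ × ℤ) : hjF (l ++ m) s = hjF l (hjF m s) := by
  induction l with
  | nil => simp [hjF]
  | cons c t ih => simp [hjF, ih]

lemma hjF_linear (l : List ℤ) (x y : ℤ) :
    hjF l (x, y) = (x * (hjF l (1,0)).1 + y * (hjF l (0,1)).1,
      x * (hjF l (1,0)).2 + y * (hjF l (0,1)).2) := by
  induction l with
  | nil => simp [hjF]
  | cons c t ih => simp [hjF, ih]; ring

lemma hjF_det (l : List ℤ) :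
    (hjF l (1,0)).1 * (hjF l (0,1)).2 - (hjF l (1,0)).2 * (hjF l (0,1)).1 = 1 := by
  induction l with
  | nil => simp [hjF]
  | cons c t ih => simp only [hjF]; ring_nf; ring_nf at ih; linarith

lemma hjF_bounds (l : List ℤ) (h : ∀ x ∈ l, 2 ≤ x) :
    0 ≤ (hjF l (1,0)).2 ∧ (hjF l (1,0)).2 < (hjF l (1,0)).1 := by
  induction l with
  | nil => simp [hjF]
  | cons c t ih =>
    have hc : 2 ≤ c := h c (by simp)
    have iht := ih (fun x hx => h x (by simp [hx]))
    simp only [hjF]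
    refine ⟨by linarith [iht.1, iht.2], ?_⟩
    nlinarith [iht.1, iht.2]

lemma hjF_reverse (l : List ℤ) :
    hjF l.reverse (1,0) = ((hjF l (1,0)).1, -(hjF l (0,1)).1) ∧
    hjF l.reverse (0,1) = (-(hjF l (1,0)).2, (hjF l (0,1)).2) := by
  induction l with
  | nil => simp [hjF]
  | cons c t ih =>
    have h1 : (c :: t).reverse = t.reverse ++ [c] := by simp
    rw [h1, hjF_append, hjF_append]
    have e1 : hjF [c] ((1:ℤ),(0:ℤ)) = (c, 1) := by simp [hjF]
    have e2 : hjF [c] ((0:ℤ),(1:ℤ)) = (-1, 0) := by simp [hjF]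
    rw [e1, e2, hjF_linear t.reverse c 1, hjF_linear t.reverse (-1) 0, ih.1, ih.2]
    simp only [hjF, Prod.mk.injEq]
    refine ⟨⟨by ring, by ring⟩, ⟨by ring, by ring⟩⟩

lemma hj_eq_div (l : List ℤ) (h : ∀ x ∈ l, 2 ≤ x) :
    hj (castList l) = ((hjF l (1,0)).1 : ℚ) / ((hjF l (1,0)).2 : ℚ) := by
  induction l with
  | nil => simp [hj, hjF, castList]
  | cons c t ih =>
    have hc : 2 ≤ c := h c (by simp)
    have iht := ih (fun x hx => h x (by simp [hx]))
    have hb := hjF_bounds t (fun x hx => h x (by simp [hx]))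
    have hp1 : (1:ℤ) ≤ (hjF t (1,0)).1 := by linarith [hb.1, hb.2]
    have hpQ : ((hjF t (1,0)).1 : ℚ) ≠ 0 := by exact_mod_cast (by linarith : (hjF t (1,0)).1 ≠ 0)
    have : castList (c :: t) = (c : ℚ) :: castList t := by simp [castList]
    rw [this]
    show (c : ℚ) - (hj (castList t))⁻¹ = _
    rw [iht, inv_div]
    simp only [hjF]
    push_cast
    field_simp

lemma hj_gt_one (l : List ℚ) (h : ∀ x ∈ l, 2 ≤ x) (hne : l ≠ []) : 1 < hj l := by
  induction l with
  | nil => simp at hne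
  | cons c t ih =>
    have hc : 2 ≤ c := h c (by simp)
    show 1 < c - (hj t)⁻¹
    rcases eq_or_ne t [] with rfl | ht
    · simp [hj]; linarith
    · have h1 : 1 < hj t := ih (fun x hx => h x (by simp [hx])) ht
      have h2 : 0 < (hj t)⁻¹ := by positivity
      have h3 : (hj t)⁻¹ < 1 := by
        rw [inv_lt_one_iff₀]; right; exact h1
      linarith

lemma hjF_pin (l : List ℤ) (h : ∀ x ∈ l, 2 ≤ x) (N A : ℤ) (hA1 : 1 ≤ A) (hAN : A < N)
    (hcop : IsCoprime N A) (hval : hj (castList l) = (N : ℚ) / A) :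
    hjF l (1,0) = (N, A) := by
  have hb := hjF_bounds l h
  have hlne : l ≠ [] := by
    rintro rfl
    have h0 : hj (castList []) = 0 := by simp [hj, castList]
    rw [h0] at hval
    have hpos : (0:ℚ) < (N : ℚ) / A := by
      apply div_pos <;> exact_mod_cast (by linarith : (0:ℤ) < _)
    rw [← hval] at hpos
    exact lt_irrefl _ hpos
  have hQ1 : 1 ≤ (hjF l (1,0)).2 := by
    cases l with
    | nil => exact absurd rfl hlne
    | cons c t =>
      have hbt := hjF_bounds t (fun x hx => h x (by simp [hx]))
      simp only [hjF]
      linarith [hbt.1, hbt.2]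
  have hP1 : 1 ≤ (hjF l (1,0)).1 := by linarith [hb.2]
  set P := (hjF l (1,0)).1 with hPdef
  set Q := (hjF l (1,0)).2 with hQdef
  have hcross : P * A = N * Q := by
    rw [hj_eq_div l h] at hval
    have hQ0 : (Q:ℚ) ≠ 0 := by exact_mod_cast (by linarith : Q ≠ 0)
    have hA0 : (A:ℚ) ≠ 0 := by exact_mod_cast (by linarith : A ≠ 0)
    rw [div_eq_div_iff hQ0 hA0] at hval
    exact_mod_cast hval
  have hcopPQ : IsCoprime P Q := by
    refine ⟨(hjF l (0,1)).2, -(hjF l (0,1)).1, ?_⟩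
    have := hjF_det l
    rw [← hPdef, ← hQdef] at this
    linarith [this]
  have hPN : P ∣ N := by
    have : P ∣ N * Q := ⟨A, by linarith [hcross]⟩
    exact hcopPQ.dvd_of_dvd_mul_right this
  have hNP : N ∣ P := by
    have : N ∣ P * A := ⟨Q, hcross⟩
    exact hcop.dvd_of_dvd_mul_right this
  have hPeq : P = N := Int.dvd_antisymm (by linarith) (by linarith) hPN hNP
  have hQeq : Q = A := by
    have hN0 : N ≠ 0 := by linarith
    have := hcross
    rw [hPeq] at this
    exact (mul_left_cancel₀ hN0 this.symm)
  rw [← hPdef, ← hQdef] at *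
  rw [Prod.ext_iff]
  exact ⟨hPeq, hQeq⟩

def hjSeq : List ℤ → ℤ × ℤ → ℤ × ℤ
  | [], s => s
  | c :: l, s => hjSeq l (s.2, c * s.2 - s.1)

lemma hjSeq_eq (l : List ℤ) (x y : ℤ) :
    hjSeq l (x, y) = ((hjF l.reverse (y, x)).2, (hjF l.reverse (y, x)).1) := by
  induction l generalizing x y with
  | nil => simp [hjSeq, hjF]
  | cons c t ih =>
    have h1 : (c :: t).reverse = t.reverse ++ [c] := by simp
    rw [h1, hjF_append]
    have e1 : hjF [c] ((y:ℤ), x) = (c * y - x, y) := by simp [hjF]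
    rw [e1]
    show hjSeq t (y, c * y - x) = _
    exact ih y (c * y - x)

lemma hjSeq_bounds (l : List ℤ) (h : ∀ x ∈ l, 2 ≤ x) (x y : ℤ) (hx : 0 ≤ x) (hxy : x < y) :
    0 ≤ (hjSeq l (x, y)).1 ∧ (hjSeq l (x, y)).1 < (hjSeq l (x, y)).2 := by
  induction l generalizing x y with
  | nil => exact ⟨hx, hxy⟩
  | cons c t ih =>
    have hc : 2 ≤ c := h c (by simp)
    show 0 ≤ (hjSeq t (y, c * y - x)).1 ∧ _
    exact ih (fun z hz => h z (by simp [hz])) y (c * y - x) (by linarith) (by nlinarith)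

lemma hj_seed (t : List ℤ) (h : ∀ x ∈ t, 2 ≤ x) (x y : ℤ) (hx : 0 ≤ x) (hxy : x < y)
    (M : List ℚ) (hM : hj M = ((hjSeq t (x, y)).1 : ℚ) / ((hjSeq t (x, y)).2 : ℚ)) :
    hj (castList t ++ M) = (x : ℚ) / y := by
  induction t generalizing x y with
  | nil => simpa [castList, hjSeq] using hM
  | cons c t ih =>
    have hc : 2 ≤ c := h c (by simp)
    have hM' : hj M = ((hjSeq t (y, c * y - x)).1 : ℚ) / ((hjSeq t (y, c * y - x)).2 : ℚ) := hM
    have ihres : hj (castList t ++ M) = (y : ℚ) / (c * y - x : ℤ) :=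
      ih (fun z hz => h z (by simp [hz])) y (c * y - x) (by linarith) (by nlinarith) hM'
    have hcast : castList (c :: t) ++ M = (c : ℚ) :: (castList t ++ M) := by simp [castList]
    rw [hcast]
    show (c : ℚ) - (hj (castList t ++ M))⁻¹ = _
    rw [ihres, inv_div]
    have hy0 : (y : ℚ) ≠ 0 := by exact_mod_cast (by linarith : y ≠ 0)
    push_cast
    field_simp
    ring

lemma hj_tails (t : List ℚ) (h : ∀ x ∈ t, 2 ≤ x) (M : List ℚ)
    (hMt : ∀ l' : List ℚ, l' ≠ [] → l' ≠ M → l' <:+ M → hj l' ≠ 0)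
    (h0 : 0 ≤ hj (t ++ M)) (h1 : hj (t ++ M) < 1) :
    ∀ l' : List ℚ, l' ≠ [] → l' ≠ t ++ M → l' <:+ t ++ M → hj l' ≠ 0 := by
  induction t with
  | nil => simpa using hMt
  | cons c t ih =>
    have hc : 2 ≤ c := h c (by simp)
    have hfull : hj ((c :: t) ++ M) = c - (hj (t ++ M))⁻¹ := rfl
    have hvinv : 1 < (hj (t ++ M))⁻¹ := by
      rw [hfull] at h0 h1
      linarith
    have hvne : hj (t ++ M) ≠ 0 := by
      intro hz
      rw [hz] at hvinv
      simp at hvinv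
      linarith
    have hv0 : 0 < hj (t ++ M) := by
      rcases lt_trichotomy (hj (t ++ M)) 0 with hlt | hz | hgt
      · have : (hj (t ++ M))⁻¹ < 0 := inv_lt_zero.2 hlt
        linarith
      · exact absurd hz hvne
      · exact hgt
    have hv1 : hj (t ++ M) < 1 := by
      have := (one_lt_inv_iff₀).1 hvinv
      exact this.2
    intro l' hne hnefull hsuf
    rw [List.cons_append, List.suffix_cons_iff] at hsuf
    rcases hsuf with rfl | hsuf
    · exact absurd rfl (by rwa [List.cons_append] at hnefull)
    · rcases eq_or_ne l' (t ++ M) with rfl | hne2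
      · exact hvne
      · exact ih (fun z hz => h z (by simp [hz])) (le_of_lt hv0) hv1 l' hne hne2 hsuf

lemma castList_eq (l : List ℤ) : castList l = l.map (fun z : ℤ => (z : ℚ)) := by
  induction l with
  | nil => rfl
  | cons c t ih =>
    simp only [castList] at ih ⊢
    simp_all

lemma castList_mem (l : List ℤ) (x : ℚ) (hx : x ∈ castList l) : ∃ z ∈ l, (z : ℚ) = x := by
  rw [castList_eq] at hx
  exact List.mem_map.mp hx

lemma castList_reverse (l : List ℤ) : castList l.reverse = (castList l).reverse := by
  rw [castList_eq, castList_eq]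
  exact List.map_reverse

lemma castList_append (l m : List ℤ) : castList (l ++ m) = castList l ++ castList m := by
  rw [castList_eq, castList_eq, castList_eq]
  exact List.map_append

lemma castList_cons (c : ℤ) (l : List ℤ) : castList (c :: l) = (c : ℚ) :: castList l := rfl

lemma hjF_den_pos (l : List ℤ) (h : ∀ x ∈ l, 2 ≤ x) (hne : l ≠ []) :
    1 ≤ (hjF l (1,0)).2 := by
  cases l with
  | nil => exact absurd rfl hne
  | cons c t =>
    have hbt := hjF_bounds t (fun x hx => h x (by simp [hx]))
    simp only [hjF]
    linarith [hbt.1, hbt.2]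

theorem stmt_3 (n a : ℤ) (ha : 1 ≤ a) (han : a < n) (hcop : Int.gcd n a = 1)
    (B A : List ℤ) (hB : ∀ x ∈ B, 2 ≤ x) (hA : ∀ x ∈ A, 2 ≤ x)
    (hBval : hj (castList B) = (n : ℚ) / a)
    (hAval : hj (castList A) = (n : ℚ) / (n - a)) :
    hjZero (castList (B ++ 1 :: A.reverse)) := by
  have hn2 : 2 ≤ n := by linarith
  have cop : IsCoprime n a := Int.isCoprime_iff_gcd_eq_one.mpr hcop
  have copNA : IsCoprime n (n - a) := by
    obtain ⟨u, v, huv⟩ := cop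
    exact ⟨u + v, -v, by linear_combination huv⟩
  have hpinB : hjF B (1,0) = (n, a) := hjF_pin B hB n a ha han cop hBval
  have hpinA : hjF A (1,0) = (n, n - a) := by
    apply hjF_pin A hA n (n - a) (by linarith) (by linarith) copNA
    rw [hAval]; push_cast; ring_nf
  -- reversed lists: entries and values
  have hBrev : ∀ x ∈ B.reverse, 2 ≤ x := fun x hx => hB x (List.mem_reverse.mp hx)
  have hArev : ∀ x ∈ A.reverse, 2 ≤ x := fun x hx => hA x (List.mem_reverse.mp hx)
  have hBne : B ≠ [] := by
    rintro rfl
    simp [hjF, Prod.ext_iff] at hpinB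
    omega
  have hAne : A ≠ [] := by
    rintro rfl
    simp [hjF, Prod.ext_iff] at hpinA
    omega
  set mB : ℤ := (hjF B.reverse (1,0)).2 with hmBdef
  set mA : ℤ := (hjF A.reverse (1,0)).2 with hmAdef
  have hrevB := hjF_reverse B
  have hrevA := hjF_reverse A
  have hmB_eq : mB = -(hjF B (0,1)).1 := by rw [hmBdef, hrevB.1]
  have hmA_eq : mA = -(hjF A (0,1)).1 := by rw [hmAdef, hrevA.1]
  have hnumBrev : (hjF B.reverse (1,0)).1 = n := by rw [hrevB.1, hpinB]
  have hnumArev : (hjF A.reverse (1,0)).1 = n := by rw [hrevA.1, hpinA]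
  have hmB1 : 1 ≤ mB := hjF_den_pos B.reverse hBrev (by simpa using hBne)
  have hmA1 : 1 ≤ mA := hjF_den_pos A.reverse hArev (by simpa using hAne)
  have hmBn : mB < n := by
    have := (hjF_bounds B.reverse hBrev).2
    rwa [hnumBrev] at this
  have hmAn : mA < n := by
    have := (hjF_bounds A.reverse hArev).2
    rwa [hnumArev] at this
  -- the key identity mB + mA = n
  have detB : n * (hjF B (0,1)).2 - a * (hjF B (0,1)).1 = 1 := by
    have := hjF_det B
    rw [hpinB] at this
    simpa using this
  have detA : n * (hjF A (0,1)).2 - (n - a) * (hjF A (0,1)).1 = 1 := by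
    have := hjF_det A
    rw [hpinA] at this
    simpa using this
  have hsum : mB + mA = n := by
    have hdvd : n ∣ a * (mB + mA) := by
      refine ⟨(hjF A (0,1)).2 + mA - (hjF B (0,1)).2, ?_⟩
      have e1 : n * (hjF B (0,1)).2 + a * mB = 1 := by
        rw [hmB_eq]; linarith [detB]
      have e2 : n * (hjF A (0,1)).2 + (n - a) * mA = 1 := by
        rw [hmA_eq]; linarith [detA]
      linear_combination e1 - e2
    have hdvd2 : n ∣ (mB + mA) := cop.dvd_of_dvd_mul_left hdvd
    obtain ⟨k, hk⟩ := hdvd2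
    have hk1 : k = 1 := by nlinarith [hk]
    rw [hk, hk1, mul_one]
  -- value of M
  set M : List ℚ := (1 : ℚ) :: (castList A).reverse with hMdef
  have hcastrev : castList A.reverse = (castList A).reverse := castList_reverse A
  have hvalArev : hj ((castList A).reverse) = (n : ℚ) / (mA : ℚ) := by
    rw [← hcastrev, hj_eq_div A.reverse hArev, hnumArev, ← hmAdef]
  have hMval : hj M = (mB : ℚ) / (n : ℚ) := by
    show (1 : ℚ) - (hj ((castList A).reverse))⁻¹ = _
    rw [hvalArev, inv_div]
    have hn0 : (n : ℚ) ≠ 0 := by exact_mod_cast (by linarith : n ≠ 0)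
    have : (mB : ℚ) = (n : ℚ) - (mA : ℚ) := by
      have : (mB : ℚ) + (mA : ℚ) = (n : ℚ) := by exact_mod_cast hsum
      linarith
    rw [this]
    field_simp
  -- the seed computation
  have hseed : hjSeq B (0, 1) = (mB, n) := by
    rw [hjSeq_eq, hnumBrev, ← hmBdef]
  -- full value is zero
  have hfull : hj (castList B ++ M) = 0 := by
    have := hj_seed B hB 0 1 le_rfl one_pos M (by rw [hseed, hMval])
    simpa using this
  -- rewrite the target list
  have hL : castList (B ++ 1 :: A.reverse) = castList B ++ M := by
    rw [hMdef, castList_append, castList_cons, castList_reverse]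
    norm_num
  rw [hL]
  constructor
  · -- tails nonzero
    intro l' hne hnefull hsuf
    refine hj_tails (castList B) ?_ M ?_ (by rw [hfull]) (by rw [hfull]; norm_num) l' hne hnefull hsuf
    · intro x hx
      obtain ⟨z, hz, rfl⟩ := castList_mem B x hx
      exact_mod_cast hB z hz
    · intro l'' hne'' hnefull'' hsuf''
      rw [hMdef, List.suffix_cons_iff] at hsuf''
      rcases hsuf'' with rfl | hsuf''
      · exact absurd hMdef.symm hnefull''
      · have hgt : 1 < hj l'' := by
          apply hj_gt_one l'' _ hne''
          intro x hx
          have hx2 : x ∈ (castList A).reverse := hsuf''.subset hx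
          rw [List.mem_reverse] at hx2
          obtain ⟨z, hz, rfl⟩ := castList_mem A x hx2
          exact_mod_cast hA z hz
        linarith
  · exact hfull
end

section
/- Let n > a ≥ 1 be coprime integers, with dual Hirzebruch–Jung expansions n/a = [b_1, …, b_r] and n/(n−a) = [a_1, …, a_e] (all entries ≥ 2). Then (b_1 − 1) + (b_2 − 1) + ⋯ + (b_r − 1) = (a_1 − 1) + ⋯ + (a_e − 1) = r + e − 1. -/
lemma hj_gt_one_s4 : ∀ (B : List ℤ), (∀ x ∈ B, 2 ≤ x) → B ≠ [] → 1 < hj (castList B)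
  | [], _, h => absurd rfl h
  | b :: B', hB, _ => by
    have hb : (2:ℚ) ≤ (b:ℚ) := by exact_mod_cast hB b List.mem_cons_self
    have hcast : hj (castList (b :: B')) = (b:ℚ) - (hj (castList B'))⁻¹ := rfl
    rw [hcast]
    rcases eq_or_ne B' [] with h | h
    · subst h; simp [castList, hj]; linarith
    · have h1 := hj_gt_one_s4 B' (fun x hx => hB x (List.mem_cons_of_mem _ hx)) h
      have h0 : 0 < hj (castList B') := by linarith
      have h2 : 0 < (hj (castList B'))⁻¹ := inv_pos.mpr h0
      have h3 : (hj (castList B'))⁻¹ < 1 := by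
        rw [inv_lt_one_iff₀]; right; exact h1
      linarith

lemma hj_inv_bounds (B : List ℤ) (hB : ∀ x ∈ B, 2 ≤ x) :
    0 ≤ (hj (castList B))⁻¹ ∧ (hj (castList B))⁻¹ < 1 := by
  rcases eq_or_ne B [] with h | h
  · subst h; simp [castList, hj]
  · have h1 := hj_gt_one_s4 B hB h
    constructor
    · exact le_of_lt (inv_pos.mpr (by linarith))
    · rw [inv_lt_one_iff₀]; right; exact h1

lemma exists_head (B : List ℤ) (hB : ∀ x ∈ B, 2 ≤ x) (q : ℚ) (hq : 1 < q)
    (hv : hj (castList B) = q) :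
    ∃ b B', B = b :: B' ∧ (∀ x ∈ B', 2 ≤ x) ∧ 2 ≤ b ∧ (b:ℚ) - 1 < q ∧ q ≤ (b:ℚ) ∧
      (hj (castList B'))⁻¹ = (b:ℚ) - q ∧ ((b:ℚ) = q → B' = []) := by
  match B with
  | [] =>
    exfalso
    simp [castList, hj] at hv
    rw [← hv] at hq
    norm_num at hq
  | b :: B' =>
    have hB' : ∀ x ∈ B', 2 ≤ x := fun x hx => hB x (List.mem_cons_of_mem _ hx)
    have hbounds := hj_inv_bounds B' hB'
    have hv' : (b:ℚ) - (hj (castList B'))⁻¹ = q := hv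
    refine ⟨b, B', rfl, hB', hB b List.mem_cons_self, by linarith [hbounds.2],
      by linarith [hbounds.1], by linarith, ?_⟩
    intro hbq
    by_contra hne
    have h1 := hj_gt_one_s4 B' hB' hne
    have h2 : 0 < (hj (castList B'))⁻¹ := inv_pos.mpr (by linarith)
    linarith

lemma main_lemma : ∀ N : ℕ, ∀ n a : ℤ, n + a ≤ (N:ℤ) → 1 ≤ a → a < n → Int.gcd n a = 1 →
    ∀ B A : List ℤ, (∀ x ∈ B, 2 ≤ x) → (∀ x ∈ A, 2 ≤ x) →
    hj (castList B) = (n : ℚ) / a → hj (castList A) = (n : ℚ) / (n - a) →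
    (B.map (fun x => x - 1)).sum = (A.map (fun x => x - 1)).sum ∧
    (B.map (fun x => x - 1)).sum = (B.length : ℤ) + (A.length : ℤ) - 1 := by
  intro N
  induction N with
  | zero =>
    intro n a hm ha han _
    exfalso
    simp only [Nat.cast_zero] at hm
    omega
  | succ N ih =>
    intro n a hm ha han hcop B A hB hA hBval hAval
    push_cast at hm
    have ha0 : (0:ℚ) < (a:ℚ) := by exact_mod_cast (by omega : (0:ℤ) < a)
    have hna0 : (0:ℚ) < (n:ℚ) - (a:ℚ) := by
      have : ((a:ℚ)) < (n:ℚ) := by exact_mod_cast han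
      linarith
    have hqB : 1 < (n:ℚ) / a := by
      rw [lt_div_iff₀ ha0]
      have : ((a:ℚ)) < (n:ℚ) := by exact_mod_cast han
      linarith
    have hqA : 1 < (n:ℚ) / ((n:ℚ) - a) := by
      rw [lt_div_iff₀ hna0]
      linarith
    have hcp : IsCoprime (n:ℤ) a := Int.isCoprime_iff_gcd_eq_one.mpr hcop
    rcases lt_trichotomy (2 * a) n with h2 | h2 | h2
    · -- reduction case : n > 2a
      have h2q : ((2:ℚ) * a) < (n:ℚ) := by exact_mod_cast h2
      have hqB2 : (2:ℚ) < (n:ℚ) / a := by rw [lt_div_iff₀ ha0]; linarith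
      have hqA2 : (n:ℚ) / ((n:ℚ) - a) < 2 := by rw [div_lt_iff₀ hna0]; linarith
      obtain ⟨b, B', rfl, hB', hb2, hb3, hb4, hinvB, -⟩ :=
        exists_head B hB _ hqB hBval
      obtain ⟨a1, A', rfl, hA', ha12, ha13, ha14, hinvA, -⟩ :=
        exists_head A hA _ hqA hAval
      -- b ≥ 3
      have hb3' : 3 ≤ b := by
        have : (2:ℚ) < (b:ℚ) := by linarith
        exact_mod_cast this
      -- a1 = 2
      have ha1 : a1 = 2 := by
        have h1 : (a1:ℚ) < 3 := by linarith
        have h1' : a1 < 3 := by exact_mod_cast h1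
        omega
      subst ha1
      -- value of (b-1) :: B'
      have hB''val : hj (castList ((b-1) :: B')) = ((n:ℚ) - a) / a := by
        have : hj (castList ((b-1) :: B')) = (((b-1 : ℤ)):ℚ) - (hj (castList B'))⁻¹ := rfl
        rw [this, hinvB]
        push_cast
        field_simp
        ring
      -- value of A'
      have hA'inv : (hj (castList A'))⁻¹ = ((n:ℚ) - 2*a) / ((n:ℚ) - a) := by
        rw [hinvA]
        field_simp
        ring
      have hA'val : hj (castList A') = ((n:ℚ) - a) / ((n:ℚ) - 2*a) := by
        have hne : (hj (castList A'))⁻¹ ≠ 0 := by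
          rw [hA'inv]
          apply div_ne_zero
          · intro h; rw [sub_eq_zero] at h
            have : (n:ℚ) = 2*a := h
            have : n = 2*a := by exact_mod_cast this
            omega
          · linarith
        have : hj (castList A') = ((hj (castList A'))⁻¹)⁻¹ := (inv_inv _).symm
        rw [this, hA'inv, inv_div]
      -- apply IH at (n - a, a)
      have hm' : (n - a) + a ≤ (N:ℤ) := by omega
      have han' : a < n - a := by omega
      have hcop' : Int.gcd (n - a) a = 1 := by
        rw [← Int.isCoprime_iff_gcd_eq_one]
        have h := hcp.add_mul_left_left (-1)
        have e : n + a * (-1) = n - a := by ring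
        rwa [e] at h
      have hBent : ∀ x ∈ (b-1) :: B', 2 ≤ x := by
        intro x hx
        rcases List.mem_cons.mp hx with h | h
        · omega
        · exact hB' x h
      have hBv : hj (castList ((b-1) :: B')) = ((n - a : ℤ) : ℚ) / (a : ℚ) := by
        rw [hB''val]; push_cast; ring
      have hAv : hj (castList A') = ((n - a : ℤ) : ℚ) / (((n - a : ℤ) : ℚ) - (a:ℚ)) := by
        rw [hA'val]; push_cast; ring_nf
      have hres := ih (n - a) a hm' ha han' hcop' ((b-1) :: B') A' hBent hA' hBv hAv
      simp only [List.map_cons, List.sum_cons, List.length_cons] at hres ⊢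
      push_cast at hres ⊢
      omega
    · -- n = 2a : base case, a = 1, n = 2
      have hunit : IsUnit a := hcp.isUnit_of_dvd' ⟨2, by omega⟩ dvd_rfl
      rw [Int.isUnit_iff] at hunit
      have ha1 : a = 1 := by omega
      have hn2 : n = 2 := by omega
      subst ha1; subst hn2
      have hBval2 : hj (castList B) = (2:ℚ) := by rw [hBval]; norm_num
      have hAval2 : hj (castList A) = (2:ℚ) := by rw [hAval]; norm_num
      obtain ⟨b, B', rfl, hB', hb2, hb3, hb4, hinvB, hBe⟩ :=
        exists_head B hB 2 (by norm_num) hBval2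
      obtain ⟨a1, A', rfl, hA', ha12, ha13, ha14, hinvA, hAe⟩ :=
        exists_head A hA 2 (by norm_num) hAval2
      have hbeq : b = 2 := by
        have h1 : (b:ℚ) < 3 := by linarith
        have h1' : b < 3 := by exact_mod_cast h1
        omega
      have ha1eq : a1 = 2 := by
        have h1 : (a1:ℚ) < 3 := by linarith
        have h1' : a1 < 3 := by exact_mod_cast h1
        omega
      subst hbeq; subst ha1eq
      have hB'e : B' = [] := hBe (by norm_num)
      have hA'e : A' = [] := hAe (by norm_num)
      subst hB'e; subst hA'e
      norm_num
    · -- swap case : n < 2a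
      have hm' : n + (n - a) ≤ (N:ℤ) := by omega
      have ha' : 1 ≤ n - a := by omega
      have han' : n - a < n := by omega
      have hcop' : Int.gcd n (n - a) = 1 := by
        rw [← Int.isCoprime_iff_gcd_eq_one]
        have h := (hcp.neg_right).add_mul_left_right 1
        have e : -a + n * 1 = n - a := by ring
        rwa [e] at h
      have hAv : hj (castList A) = (n : ℚ) / ((n - a : ℤ) : ℚ) := by
        rw [hAval]; push_cast; ring
      have hBv : hj (castList B) = (n : ℚ) / ((n:ℚ) - ((n - a : ℤ) : ℚ)) := by
        rw [hBval]; push_cast; ring_nf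
      have hres := ih n (n - a) hm' ha' han' hcop' A B hA hB hAv hBv
      obtain ⟨h1, h2⟩ := hres
      constructor
      · omega
      · omega

theorem stmt_4 (n a : ℤ) (ha : 1 ≤ a) (han : a < n) (hcop : Int.gcd n a = 1)
    (B A : List ℤ) (hB : ∀ x ∈ B, 2 ≤ x) (hA : ∀ x ∈ A, 2 ≤ x)
    (hBval : hj (castList B) = (n : ℚ) / a)
    (hAval : hj (castList A) = (n : ℚ) / (n - a)) :
    (B.map (fun x => x - 1)).sum = (A.map (fun x => x - 1)).sum ∧
    (B.map (fun x => x - 1)).sum = (B.length : ℤ) + (A.length : ℤ) - 1 := by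
  exact main_lemma (n + a).toNat n a (Int.self_le_toNat _) ha han hcop B A hB hA hBval hAval
end

section
/- Let d ≥ 1, n ≥ 2, 1 ≤ a < n with gcd(n,a) = 1, and suppose [b_1, …, b_r] (with all b_i ≥ 2) is the Hirzebruch–Jung expansion of dn²/(dna−1). Then: (i) [2, b_1, …, b_{r−1}, b_r + 1] is the Hirzebruch–Jung expansion of d(2n−a)²/(d(2n−a)n − 1); and (ii) [b_1 + 1, b_2, …, b_r, 2] is the Hirzebruch–Jung expansion of d(n+a)²/(d(n+a)a − 1). In particular both operations again produce strings of singularities of class T. -/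
namespace HJaux

def rec2 (b : ℤ × ℤ) : List ℤ → ℤ × ℤ
  | [] => b
  | c :: cs => (c * (rec2 b cs).1 - (rec2 b cs).2, (rec2 b cs).1)

lemma rec2_nil (b : ℤ × ℤ) : rec2 b [] = b := rfl

lemma rec2_cons (b : ℤ × ℤ) (c : ℤ) (cs : List ℤ) :
    rec2 b (c :: cs) = (c * (rec2 b cs).1 - (rec2 b cs).2, (rec2 b cs).1) := rfl

lemma rec2_append (b : ℤ × ℤ) (l : List ℤ) (x : ℤ) :
    rec2 b (l ++ [x]) = rec2 (x * b.1 - b.2, b.1) l := by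
  induction l with
  | nil => rfl
  | cons c cs ih => rw [List.cons_append, rec2_cons, rec2_cons, ih]

lemma rec2_basis (u v : ℤ) (l : List ℤ) :
    rec2 (u, v) l = (u * (rec2 (1,0) l).1 + v * (rec2 (0,1) l).1,
                     u * (rec2 (1,0) l).2 + v * (rec2 (0,1) l).2) := by
  induction l with
  | nil => simp [rec2_nil]
  | cons c cs ih =>
    rw [rec2_cons, ih, rec2_cons, rec2_cons]
    simp only [Prod.mk.injEq]
    constructor
    · ring
    · trivial

lemma rec2_det (l : List ℤ) :
    (rec2 (1,0) l).1 * (rec2 (0,1) l).2 - (rec2 (0,1) l).1 * (rec2 (1,0) l).2 = 1 := by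
  induction l with
  | nil => simp [rec2_nil]
  | cons c cs ih =>
    rw [rec2_cons, rec2_cons]
    dsimp only
    linear_combination ih

lemma hj_eq (l : List ℤ) (h2 : ∀ x ∈ l, 2 ≤ x) :
    hj (castList l) = ((rec2 (1,0) l).1 : ℚ) / ((rec2 (1,0) l).2 : ℚ)
    ∧ (rec2 (1,0) l).2 < (rec2 (1,0) l).1 ∧ 0 ≤ (rec2 (1,0) l).2 := by
  induction l with
  | nil => simp [castList, hj, rec2_nil]
  | cons c cs ih =>
    obtain ⟨h1, hlt, hge⟩ := ih (fun x hx => h2 x (List.mem_cons_of_mem _ hx))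
    have hc : 2 ≤ c := h2 c List.mem_cons_self
    set p := (rec2 (1,0) cs).1 with hp'
    set q := (rec2 (1,0) cs).2 with hq'
    have hp : 0 < p := lt_of_le_of_lt hge hlt
    have hpQ : ((p:ℚ)) ≠ 0 := by exact_mod_cast hp.ne'
    rw [rec2_cons]
    refine ⟨?_, ?_, ?_⟩
    · have hcast : castList (c :: cs) = (c : ℚ) :: castList cs := rfl
      rw [hcast, hj, h1, inv_div]
      dsimp only
      push_cast
      field_simp
      rw [← hp', ← hq', mul_div_cancel_left₀ _ hpQ]
    · dsimp only
      nlinarith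
    · dsimp only
      exact hp.le

lemma sum_pos (l : List ℤ) (h2 : ∀ x ∈ l, 2 ≤ x) :
    1 ≤ (rec2 (1,1) l).2 ∧ (rec2 (1,1) l).2 ≤ (rec2 (1,1) l).1 := by
  induction l with
  | nil => simp [rec2_nil]
  | cons c cs ih =>
    obtain ⟨h1, h2'⟩ := ih (fun x hx => h2 x (List.mem_cons_of_mem _ hx))
    have hc : 2 ≤ c := h2 c List.mem_cons_self
    rw [rec2_cons]
    refine ⟨by dsimp only; linarith, ?_⟩
    dsimp only
    nlinarith

end HJaux


namespace HJaux

lemma arith_dn (d n : ℤ) (hd : 1 ≤ d) (hn : 2 ≤ n) : 2 ≤ d * n := by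
  nlinarith [mul_nonneg (show (0:ℤ) ≤ d - 1 by omega) (show (0:ℤ) ≤ n by omega)]

lemma arith_mul_ge (x a : ℤ) (hx : 0 ≤ x) (ha : 1 ≤ a) : x ≤ x * a := by
  nlinarith [mul_nonneg hx (show (0:ℤ) ≤ a - 1 by omega)]

lemma arith_mul_lt (x u v : ℤ) (hx : 0 < x) (huv : u < v) : x * u < x * v := by
  nlinarith

lemma eq_zero_of_dvd_bounds (Nv u : ℤ) (hN : 0 < Nv) (hu1 : -Nv < u) (hu2 : u < Nv)
    (hdvd : Nv ∣ u) : u = 0 := by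
  obtain ⟨k, rfl⟩ := hdvd
  rcases lt_trichotomy k 0 with h | h | h
  · nlinarith [mul_le_mul_of_nonneg_left (show k ≤ -1 by omega) (show (0:ℤ) ≤ Nv by omega)]
  · rw [h, mul_zero]
  · nlinarith [mul_le_mul_of_nonneg_left (show 1 ≤ k by omega) (show (0:ℤ) ≤ Nv by omega)]

lemma rhs_pos (d n a : ℚ) (hd : 1 ≤ d) (hn : 2 ≤ n) (ha : 1 ≤ a) :
    (0:ℚ) < d * n ^ 2 / (d * n * a - 1) := by
  have h1 : (0:ℚ) < d * n ^ 2 := by nlinarith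
  have h2 : (0:ℚ) < d * n * a - 1 := by nlinarith
  exact div_pos h1 h2

lemma arith_cp (c p : ℤ) (hc : 2 ≤ c) (hp : 0 ≤ p) : 2 * p ≤ c * p := by
  nlinarith [mul_nonneg (show (0:ℤ) ≤ c - 2 by omega) hp]

end HJaux

set_option maxHeartbeats 2000000 in
theorem stmt_6 (d n a : ℤ) (hd : 1 ≤ d) (hn : 2 ≤ n) (ha : 1 ≤ a) (han : a < n)
    (hcop : Int.gcd n a = 1) (b : List ℤ) (hb : b ≠ []) (h2 : ∀ x ∈ b, 2 ≤ x)
    (hval : hj (castList b) = (d * n ^ 2 : ℚ) / (d * n * a - 1)) :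
    hj (castList (2 :: (b.dropLast ++ [b.getLast hb + 1])))
      = (d * (2 * n - a) ^ 2 : ℚ) / (d * (2 * n - a) * n - 1) ∧
    hj (castList ((b.head hb + 1) :: (b.tail ++ [2])))
      = (d * (n + a) ^ 2 : ℚ) / (d * (n + a) * a - 1) := by
  have hbl : b.dropLast ++ [b.getLast hb] = b := List.dropLast_append_getLast hb
  obtain ⟨hjb, hbd, hbd0⟩ := HJaux.hj_eq b h2
  have h2dl : ∀ x ∈ b.dropLast, 2 ≤ x := fun x hx => h2 x (List.dropLast_sublist b |>.subset hx)
  obtain ⟨hjdl, hdd, hdd0⟩ := HJaux.hj_eq b.dropLast h2dl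
  have hsum0 := HJaux.sum_pos b.dropLast h2dl
  have hdetb := HJaux.rec2_det b
  set c := b.getLast hb with hcdef
  set dl := b.dropLast with hdldef
  have hc2 : 2 ≤ c := h2 _ (List.getLast_mem hb)
  -- structural relations between rec2 of b and rec2 of dl
  have hstrA : HJaux.rec2 (1,0) b
      = (c * (HJaux.rec2 (1,0) dl).1 + 1 * (HJaux.rec2 (0,1) dl).1,
         c * (HJaux.rec2 (1,0) dl).2 + 1 * (HJaux.rec2 (0,1) dl).2) := by
    conv_lhs => rw [← hbl, HJaux.rec2_append]
    rw [show ((c * (1:ℤ) - 0), (1:ℤ)) = (c, 1) by norm_num]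
    exact HJaux.rec2_basis c 1 dl
  have hstrB : HJaux.rec2 (0,1) b
      = ((-1) * (HJaux.rec2 (1,0) dl).1 + 0 * (HJaux.rec2 (0,1) dl).1,
         (-1) * (HJaux.rec2 (1,0) dl).2 + 0 * (HJaux.rec2 (0,1) dl).2) := by
    conv_lhs => rw [← hbl, HJaux.rec2_append]
    rw [show ((c * (0:ℤ) - 1), (0:ℤ)) = (-1, 0) by norm_num]
    exact HJaux.rec2_basis (-1) 0 dl
  have hsum1 : HJaux.rec2 ((1:ℤ),(1:ℤ)) dl
      = (1 * (HJaux.rec2 (1,0) dl).1 + 1 * (HJaux.rec2 (0,1) dl).1,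
         1 * (HJaux.rec2 (1,0) dl).2 + 1 * (HJaux.rec2 (0,1) dl).2) :=
    HJaux.rec2_basis 1 1 dl
  set P := (HJaux.rec2 (1,0) b).1 with hPdef
  set Q := (HJaux.rec2 (1,0) b).2 with hQdef
  set R1 := (HJaux.rec2 (0,1) b).1 with hR1def
  set R2 := (HJaux.rec2 (0,1) b).2 with hR2def
  set P' := (HJaux.rec2 (1,0) dl).1 with hP'def
  set Q' := (HJaux.rec2 (1,0) dl).2 with hQ'def
  set B1 := (HJaux.rec2 (0,1) dl).1 with hB1def
  set B2 := (HJaux.rec2 (0,1) dl).2 with hB2def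
  -- turn structural relations into component equations
  have hP1 : P = c * P' + B1 := by rw [hPdef, hstrA]; dsimp only; ring
  have hQ1 : Q = c * Q' + B2 := by rw [hQdef, hstrA]; dsimp only; ring
  have hR1 : R1 = -P' := by rw [hR1def, hstrB]; dsimp only; ring
  have hR2 : R2 = -Q' := by rw [hR2def, hstrB]; dsimp only; ring
  have hsum2 : 1 ≤ Q' + B2 ∧ Q' + B2 ≤ P' + B1 := by
    rw [hsum1] at hsum0
    constructor
    · have := hsum0.1; dsimp only at this; linarith
    · have := hsum0.2; dsimp only at this; linarith
  clear_value P Q R1 R2 P' Q' B1 B2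
  set N : ℤ := d * n ^ 2 with hNdef
  set M : ℤ := d * n * a - 1 with hMdef
  set X : ℤ := d * n * (n - a) - 1 with hXdef
  set Y : ℤ := d * a * (n - a) - 1 with hYdef
  clear_value N M X Y
  -- basic arithmetic bounds
  have hdn : 2 ≤ d * n := HJaux.arith_dn d n hd hn
  have hdn0 : (0:ℤ) ≤ d * n := by linarith
  have hdn0' : (0:ℤ) < d * n := by linarith
  have hdna : 2 ≤ d * n * a := by
    have := HJaux.arith_mul_ge (d * n) a hdn0 ha
    linarith
  have hM1 : 1 ≤ M := by rw [hMdef]; linarith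
  have hN1 : 2 ≤ N := by
    rw [hNdef]
    have := HJaux.arith_mul_ge (d * n) n hdn0 (by omega)
    nlinarith
  have hX1 : 1 ≤ X := by
    rw [hXdef]
    have := HJaux.arith_mul_ge (d * n) (n - a) hdn0 (by omega)
    linarith
  have hXN : X < N := by
    rw [hXdef, hNdef]
    have := HJaux.arith_mul_lt (d * n) (n - a) n hdn0' (by omega)
    nlinarith
  -- coprimality
  have hcopNM : IsCoprime N M :=
    ⟨d * a ^ 2, -(d * n * a + 1), by rw [hNdef, hMdef]; ring⟩
  have hcopPQ : IsCoprime P Q := ⟨R2, -R1, by linear_combination hdetb⟩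
  -- Q is positive
  have hRHSpos : (0:ℚ) < (d * n ^ 2 : ℚ) / (d * n * a - 1) :=
    HJaux.rhs_pos d n a (by exact_mod_cast hd) (by exact_mod_cast hn) (by exact_mod_cast ha)
  have hQ0 : 0 < Q := by
    rcases hbd0.lt_or_eq with h | h
    · exact h
    · exfalso
      have hz : hj (castList b) = 0 := by rw [hjb, ← h]; simp
      rw [hval] at hz
      exact absurd hz (ne_of_gt hRHSpos)
  -- cross-multiplied identity
  have hcross : P * M = N * Q := by
    have hQne : ((Q:ℤ):ℚ) ≠ 0 := by exact_mod_cast hQ0.ne'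
    have hMne : ((M:ℤ):ℚ) ≠ 0 := by
      have : (0:ℤ) < M := by omega
      exact_mod_cast this.ne'
    have h := hjb.symm.trans hval
    have hNQ : ((N:ℤ):ℚ) = (d:ℚ) * n ^ 2 := by rw [hNdef]; push_cast; ring
    have hMQ : ((M:ℤ):ℚ) = (d:ℚ) * n * a - 1 := by rw [hMdef]; push_cast; ring
    rw [← hNQ, ← hMQ, div_eq_div_iff hQne hMne] at h
    exact_mod_cast h
  have hQM : Q = M := by
    obtain ⟨u, v, huv⟩ := hcopPQ
    obtain ⟨s, t, hst⟩ := hcopNM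
    have hQdvdM : Q ∣ M := ⟨u * N + v * M, by linear_combination (-M) * huv + u * hcross⟩
    have hMdvdQ : M ∣ Q := ⟨s * P + t * Q, by linear_combination (-Q) * hst + (-s) * hcross⟩
    exact Int.dvd_antisymm hQ0.le (by omega) hQdvdM hMdvdQ
  have hPN : P = N := by
    have h := hcross
    rw [hQM] at h
    have hMne : M ≠ 0 := by omega
    exact mul_right_cancel₀ hMne (by linarith)
  -- bounds on P'
  have hP'1 : 1 ≤ P' := by linarith
  have hcp : 2 * P' ≤ c * P' := HJaux.arith_cp c P' hc2 (by omega)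
  have hP'N : P' < N := by
    have h1 := hsum2.1
    have h2' := hsum2.2
    linarith [hP1, hPN]
  -- key determinant identity
  have hkey : P' * M - N * Q' = 1 := by
    rw [← hPN, ← hQM]
    linear_combination hdetb + Q * hR1 - P * hR2
  have hXY : X * M - N * Y = 1 := by rw [hXdef, hMdef, hNdef, hYdef]; ring
  have heq : (P' - X) * M = N * (Q' - Y) := by linear_combination hkey - hXY
  have hP'X : P' = X := by
    obtain ⟨s, t, hst⟩ := hcopNM
    have hNdvd : N ∣ (P' - X) :=
      ⟨s * (P' - X) + t * (Q' - Y), by linear_combination (-(P' - X)) * hst + t * heq⟩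
    have h0 : P' - X = 0 :=
      HJaux.eq_zero_of_dvd_bounds N (P' - X) (by omega) (by omega) (by omega) hNdvd
    omega
  have hQ'Y : Q' = Y := by
    rw [hP'X] at heq
    have h0 : N * (Q' - Y) = 0 := by linarith
    rcases mul_eq_zero.mp h0 with h | h
    · omega
    · omega
  have e1 : c * X + B1 = N := by rw [← hP'X, ← hPN]; linarith
  have e2 : c * Y + B2 = M := by rw [← hQ'Y, ← hQM]; linarith
  constructor
  · -- first list
    have h2L : ∀ x ∈ (2 : ℤ) :: (dl ++ [c + 1]), 2 ≤ x := by
      intro x hx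
      rcases List.mem_cons.mp hx with h | hx'
      · omega
      rcases List.mem_append.mp hx' with h | h
      · exact h2dl x h
      · have hxc : x = c + 1 := List.mem_singleton.mp h
        omega
    obtain ⟨hjL, -, -⟩ := HJaux.hj_eq ((2 : ℤ) :: (dl ++ [c + 1])) h2L
    have hA : HJaux.rec2 (1,0) ((2:ℤ) :: (dl ++ [c+1])) = (2*(N + X) - (M + Y), N + X) := by
      rw [HJaux.rec2_cons, HJaux.rec2_append]
      rw [show ((c + 1) * (1:ℤ) - 0, (1:ℤ)) = (c + 1, 1) by norm_num]
      rw [HJaux.rec2_basis, ← hP'def, ← hQ'def, ← hB1def, ← hB2def]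
      simp only [Prod.mk.injEq]
      constructor
      · linear_combination 2*e1 - e2 + (2*c+2)*hP'X - (c+1)*hQ'Y
      · linear_combination e1 + (c+1)*hP'X
    rw [hjL, hA]
    have g1 : 2*(N+X) - (M+Y) = d*(2*n - a)^2 := by
      rw [hNdef, hXdef, hMdef, hYdef]; ring
    have g2 : N + X = d*(2*n - a)*n - 1 := by rw [hNdef, hXdef]; ring
    dsimp only
    rw [g1, g2]
    push_cast
    ring
  · -- second list
    have hbh : b.head hb :: b.tail = b := List.cons_head_tail hb
    set hh := b.head hb with hhdef
    set t := b.tail with htdef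
    have h2t : ∀ x ∈ t, 2 ≤ x := fun x hx => h2 x (List.mem_of_mem_tail hx)
    have hh2 : 2 ≤ hh := h2 _ (List.head_mem hb)
    have hAbNM : HJaux.rec2 (1,0) b = (N, M) := by
      rw [show ((N:ℤ), (M:ℤ)) = (P, Q) by rw [hPN, hQM], hPdef, hQdef]
    have hBbXY : HJaux.rec2 (0,1) b = (-X, -Y) := by
      rw [show ((-X:ℤ), (-Y:ℤ)) = (R1, R2) by rw [hR1, hR2, hP'X, hQ'Y], hR1def, hR2def]
    rw [← hbh, HJaux.rec2_cons] at hAbNM hBbXY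
    simp only [Prod.mk.injEq] at hAbNM hBbXY
    have h2L : ∀ x ∈ (hh + 1) :: (t ++ [(2:ℤ)]), 2 ≤ x := by
      intro x hx
      rcases List.mem_cons.mp hx with h | hx'
      · omega
      rcases List.mem_append.mp hx' with h | h
      · exact h2t x h
      · have hxc : x = 2 := List.mem_singleton.mp h
        omega
    obtain ⟨hjL, -, -⟩ := HJaux.hj_eq ((hh + 1) :: (t ++ [(2:ℤ)])) h2L
    have hA : HJaux.rec2 (1,0) ((hh+1) :: (t ++ [(2:ℤ)]))
        = (2*N + 2*M - X - Y, 2*M - Y) := by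
      rw [HJaux.rec2_cons, HJaux.rec2_append]
      rw [show ((2:ℤ) * 1 - 0, (1:ℤ)) = (2, 1) by norm_num]
      rw [HJaux.rec2_basis]
      simp only [Prod.mk.injEq]
      constructor
      · linear_combination 2*hAbNM.1 + 2*hAbNM.2 + hBbXY.1 + hBbXY.2
      · linear_combination 2 * hAbNM.2 + hBbXY.2
    rw [hjL, hA]
    have g1 : 2*N + 2*M - X - Y = d*(n + a)^2 := by
      rw [hNdef, hXdef, hMdef, hYdef]; ring
    have g2 : 2*M - Y = d*(n + a)*a - 1 := by rw [hMdef, hYdef]; ring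
    dsimp only
    rw [g1, g2]
    push_cast
    ring
end

section
/- Interior blow-down preserves zero continued fractions: let (n_1, …, n_e) be positive integers with e ≥ 3, with [n_1, …, n_e] defined and equal to 0, and suppose n_i = 1 for some 1 < i < e with n_{i−1} ≥ 2 and n_{i+1} ≥ 2. Then [n_1, …, n_{i−2}, n_{i−1} − 1, n_{i+1} − 1, n_{i+2}, …, n_e] is defined and equals 0. -/
lemma hj_cons (c : ℚ) (cs : List ℚ) : hj (c :: cs) = c - (hj cs)⁻¹ := rfl

lemma hj_append_congr (p X Y : List ℚ) (h : hj X = hj Y) : hj (p ++ X) = hj (p ++ Y) := by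
  induction p with
  | nil => simpa
  | cons a p ih => simp [hj_cons, ih]

lemma suffix_append_decomp (l' p X : List ℚ) (h : l' <:+ p ++ X) :
    l' <:+ X ∨ ∃ t, t <:+ p ∧ l' = t ++ X := by
  induction p with
  | nil => exact Or.inl (by simpa using h)
  | cons a p ih =>
    rw [List.cons_append, List.suffix_cons_iff] at h
    rcases h with h | h
    · exact Or.inr ⟨a :: p, List.suffix_refl _, h⟩
    · rcases ih h with h | ⟨t, ht, rfl⟩
      · exact Or.inl h
      · exact Or.inr ⟨t, ht.trans (List.suffix_cons a p), rfl⟩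

lemma hj_blowdown (u v : ℚ) (X : List ℚ) (hA0 : hj (v :: X) ≠ 0) (hA1 : hj (v :: X) ≠ 1) :
    hj ((u - 1) :: (v - 1) :: X) = hj (u :: 1 :: v :: X) := by
  set A := hj (v :: X) with hA
  have h1 : hj ((v - 1) :: X) = A - 1 := by
    rw [hA, hj_cons, hj_cons]; ring
  rw [hj_cons, h1, hj_cons, hj_cons, ← hA]
  have hA1' : A - 1 ≠ 0 := sub_ne_zero.mpr hA1
  field_simp
  ring

theorem stmt_10 (l₁ l₂ : List ℤ) (u v : ℤ) (hu : 2 ≤ u) (hv : 2 ≤ v)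
    (hpos : ∀ x ∈ l₁ ++ u :: 1 :: v :: l₂, 1 ≤ x)
    (h : hjZero (castList (l₁ ++ u :: 1 :: v :: l₂))) :
    hjZero (castList (l₁ ++ (u - 1) :: (v - 1) :: l₂)) := by
  classical
  set L1 := castList l₁ with hL1
  set L2 := castList l₂ with hL2
  have hco : castList (l₁ ++ u :: 1 :: v :: l₂) = L1 ++ (u:ℚ) :: 1 :: (v:ℚ) :: L2 := by
    simp [castList, hL1, hL2]
  have hcn : castList (l₁ ++ (u - 1) :: (v - 1) :: l₂)
      = L1 ++ ((u:ℚ) - 1) :: ((v:ℚ) - 1) :: L2 := by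
    simp [castList, hL1, hL2]
  rw [hco] at h
  rw [hcn]
  obtain ⟨htails, hval⟩ := h
  -- A = hj(v :: L2) is nonzero and ≠ 1
  have hsufv : (v:ℚ) :: L2 <:+ L1 ++ (u:ℚ) :: 1 :: (v:ℚ) :: L2 :=
    ⟨L1 ++ [(u:ℚ), 1], by simp⟩
  have hA0 : hj ((v:ℚ) :: L2) ≠ 0 := by
    refine htails _ (by simp) ?_ hsufv
    intro hc; apply_fun List.length at hc; simp at hc; omega
  have h10 : hj ((1:ℚ) :: (v:ℚ) :: L2) ≠ 0 := by
    refine htails _ (by simp) ?_ ⟨L1 ++ [(u:ℚ)], by simp⟩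
    intro hc; apply_fun List.length at hc; simp at hc; omega
  have hA1 : hj ((v:ℚ) :: L2) ≠ 1 := by
    intro hc
    apply h10
    rw [hj_cons, hc]
    norm_num
  have key : hj (((u:ℚ) - 1) :: ((v:ℚ) - 1) :: L2) = hj ((u:ℚ) :: 1 :: (v:ℚ) :: L2) :=
    hj_blowdown _ _ _ hA0 hA1
  constructor
  · intro l' hne hnefull hsuf
    rcases suffix_append_decomp l' L1 _ hsuf with hs | ⟨t, ht, rfl⟩
    · rw [List.suffix_cons_iff] at hs
      rcases hs with rfl | hs
      · -- l' = (u-1)::(v-1)::L2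
        rw [key]
        by_cases hn : L1 = []
        · exact absurd (by rw [hn]; simp) hnefull
        · refine htails _ (by simp) ?_ ⟨L1, rfl⟩
          intro hc; apply_fun List.length at hc; simp at hc
          exact hn hc
      · rw [List.suffix_cons_iff] at hs
        rcases hs with rfl | hs
        · -- l' = (v-1)::L2
          have : hj (((v:ℚ) - 1) :: L2) = hj ((v:ℚ) :: L2) - 1 := by
            rw [hj_cons, hj_cons]; ring
          rw [this]
          exact sub_ne_zero.mpr hA1
        · -- l' <:+ L2
          refine htails _ hne ?_ (hs.trans ⟨L1 ++ [(u:ℚ), 1, (v:ℚ)], by simp⟩)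
          intro hc
          have := hs.length_le
          rw [hc] at this; simp at this; omega
    · -- l' = t ++ (u-1)::(v-1)::L2, t <:+ L1
      rw [hj_append_congr _ _ _ key]
      obtain ⟨s, hst⟩ := id ht
      refine htails _ (by simp) ?_ ⟨s, by rw [← hst]; simp⟩
      intro hc
      have htL1 : t = L1 := by
        apply ht.eq_of_length
        apply_fun List.length at hc; simpa using hc
      rw [htL1] at hnefull
      exact hnefull rfl
  · rw [hj_append_congr _ _ _ key, hval]
end

section
/- (Termination of the maximal resolution algorithm.) Fix a positive integer n. Consider finite lists of rationals of the form k/n with 0 < k < n, and the rewriting step that replaces some adjacent pair (x, y) in the list with x + y < 1 by the triple (x, x+y, y). Then there is no infinite sequence of such rewriting steps starting from any given list; that is, after finitely many steps one reaches a list in which every adjacent pair (x, y) satisfies x + y ≥ 1. -/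
/-- One rewriting step: replace an adjacent pair `(x, y)` with `x + y < 1` by the
triple `(x, x + y, y)`. -/
def blowupStep (l l' : List ℚ) : Prop :=
  ∃ pre suf : List ℚ, ∃ x y : ℚ, x + y < 1 ∧
    l = pre ++ x :: y :: suf ∧ l' = pre ++ x :: (x + y) :: y :: suf

/-- Weight of an adjacent pair. -/
noncomputable def pairW (n : ℕ) (x y : ℚ) : ℝ :=
  (3 : ℝ) ^ ((n : ℝ) * (1 - (x : ℝ) - (y : ℝ)))

/-- Measure: sum of weights over adjacent pairs. -/
noncomputable def mu (n : ℕ) : List ℚ → ℝ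
  | x :: y :: t => pairW n x y + mu n (y :: t)
  | _ => 0

lemma pairW_pos (n : ℕ) (x y : ℚ) : 0 < pairW n x y :=
  Real.rpow_pos_of_pos (by norm_num) _

lemma mu_nonneg (n : ℕ) (l : List ℚ) : 0 ≤ mu n l := by
  induction l with
  | nil => simp [mu]
  | cons x t ih =>
    cases t with
    | nil => simp [mu]
    | cons y t' =>
      have := pairW_pos n x y
      simp only [mu]
      linarith

lemma mu_append_cons (n : ℕ) (a : ℚ) (rest : List ℚ) :
    ∀ pre : List ℚ, mu n (pre ++ a :: rest) = mu n (pre ++ [a]) + mu n (a :: rest) := by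
  intro pre
  induction pre with
  | nil => simp [mu]
  | cons p pre' ih =>
    cases pre' with
    | nil =>
      cases rest with
      | nil => simp [mu]
      | cons b r => simp [mu]
    | cons q pre'' =>
      simp only [List.cons_append, List.append_eq, mu] at ih ⊢
      linarith

lemma mu_step (n : ℕ) (x y : ℚ) (pre suf : List ℚ) :
    mu n (pre ++ x :: (x + y) :: y :: suf) =
      mu n (pre ++ x :: y :: suf) +
        (pairW n x (x + y) + pairW n (x + y) y - pairW n x y) := by
  rw [mu_append_cons n x (y :: suf) pre, mu_append_cons n x ((x+y) :: y :: suf) pre]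
  simp only [mu]
  ring

lemma pairW_key (n : ℕ) (hn : 0 < n) (x y : ℚ)
    (hx : (1 : ℚ) / n ≤ x) (hy : (1 : ℚ) / n ≤ y) (hxy : x + y < 1) :
    pairW n x (x + y) + pairW n (x + y) y ≤ pairW n x y - 1/3 := by
  have hn' : (0 : ℝ) < n := by exact_mod_cast hn
  have hn0 : (0 : ℚ) < (n : ℚ) := by exact_mod_cast hn
  rw [div_le_iff₀ hn0] at hx hy
  have hx' : (1 : ℝ) ≤ (n : ℝ) * (x : ℝ) := by
    have : (1 : ℝ) ≤ (x : ℝ) * (n : ℝ) := by exact_mod_cast hx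
    linarith
  have hy' : (1 : ℝ) ≤ (n : ℝ) * (y : ℝ) := by
    have : (1 : ℝ) ≤ (y : ℝ) * (n : ℝ) := by exact_mod_cast hy
    linarith
  have hxy' : (x : ℝ) + (y : ℝ) < 1 := by exact_mod_cast hxy
  have hW1 : (1 : ℝ) ≤ pairW n x y := by
    rw [pairW]
    have h0 : (0 : ℝ) ≤ (n : ℝ) * (1 - (x : ℝ) - (y : ℝ)) := by
      apply mul_nonneg (le_of_lt hn'); linarith
    calc (1 : ℝ) = (3 : ℝ) ^ (0 : ℝ) := by simp
    _ ≤ _ := Real.rpow_le_rpow_of_exponent_le (by norm_num) h0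
  have hthird : ∀ t : ℝ, 1 ≤ t → (3 : ℝ) ^ (-t) ≤ 1/3 := by
    intro t ht
    have := Real.rpow_le_rpow_of_exponent_le (show (1:ℝ) ≤ 3 by norm_num)
      (show -t ≤ -1 by linarith)
    rwa [Real.rpow_neg_one, show ((3:ℝ)⁻¹ = 1/3) by norm_num] at this
  have h1 : pairW n x (x + y) = pairW n x y * (3 : ℝ) ^ (-((n:ℝ) * x)) := by
    rw [pairW, pairW, ← Real.rpow_add (by norm_num)]
    congr 1; push_cast; ring
  have h2 : pairW n (x + y) y = pairW n x y * (3 : ℝ) ^ (-((n:ℝ) * y)) := by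
    rw [pairW, pairW, ← Real.rpow_add (by norm_num)]
    congr 1; push_cast; ring
  have hb1 : pairW n x (x + y) ≤ pairW n x y * (1/3) := by
    rw [h1]
    exact mul_le_mul_of_nonneg_left (hthird _ hx') (by linarith)
  have hb2 : pairW n (x + y) y ≤ pairW n x y * (1/3) := by
    rw [h2]
    exact mul_le_mul_of_nonneg_left (hthird _ hy') (by linarith)
  nlinarith [pairW_pos n x y]

theorem stmt_15 (n : ℕ) (hn : 0 < n) (l : List ℚ)
    (hl : ∀ x ∈ l, ∃ k : ℕ, 0 < k ∧ k < n ∧ x = (k : ℚ) / n) :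
    ¬ ∃ f : ℕ → List ℚ, f 0 = l ∧ ∀ m : ℕ, blowupStep (f m) (f (m + 1)) := by
  rintro ⟨f, hf0, hstep⟩
  have hn0 : (0 : ℚ) < n := by exact_mod_cast hn
  -- invariant: all entries are at least 1/n
  have inv : ∀ m, ∀ z ∈ f m, (1 : ℚ) / n ≤ z := by
    intro m
    induction m with
    | zero =>
      rw [hf0]
      intro z hz
      obtain ⟨k, hk0, _, rfl⟩ := hl z hz
      have hk : (1 : ℚ) ≤ k := by exact_mod_cast hk0
      gcongr
    | succ m ih =>
      obtain ⟨pre, suf, x, y, hxy, he, he'⟩ := hstep m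
      have hx : (1 : ℚ) / n ≤ x := ih x (by rw [he]; simp)
      have hy : (1 : ℚ) / n ≤ y := ih y (by rw [he]; simp)
      have hpos : (0 : ℚ) ≤ 1 / n := by positivity
      intro z hz
      rw [he'] at hz
      simp only [List.mem_append, List.mem_cons] at hz
      rcases hz with h | h | h | h | h
      · exact ih z (by rw [he]; simp [h])
      · subst h; exact hx
      · subst h; linarith
      · subst h; exact hy
      · exact ih z (by rw [he]; simp [h])
  have hdec : ∀ m, mu n (f (m + 1)) ≤ mu n (f m) - 1/3 := by
    intro m
    obtain ⟨pre, suf, x, y, hxy, he, he'⟩ := hstep m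
    have hx : (1 : ℚ) / n ≤ x := inv m x (by rw [he]; simp)
    have hy : (1 : ℚ) / n ≤ y := inv m y (by rw [he]; simp)
    have key := pairW_key n hn x y hx hy hxy
    rw [he', he, mu_step]
    linarith
  have hbound : ∀ m : ℕ, mu n (f m) ≤ mu n l - (m : ℝ) / 3 := by
    intro m
    induction m with
    | zero => simp [hf0]
    | succ m ih =>
      have := hdec m
      push_cast
      linarith
  obtain ⟨m, hm⟩ := exists_nat_gt (3 * mu n l)
  have h1 := hbound m
  have h2 := mu_nonneg n (f m)
  linarith
end
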